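/- arXiv:2202.09404 — 2 statements merged into one kernel-verified Lean document; each statement's English description precedes it below -/
import Mathlib

section
/- For all real numbers x, y ≥ 0 and every real p ≥ 3, one has (x+y)^p - x^p - y^p - p·x^{p-1}·y - p·x·y^{p-1} ≥ 0. -/
open Real

lemma bern (u t r : ℝ) (hu : 0 ≤ u) (ht : 0 < t) (hr : 1 ≤ r) :
    t ^ r + r * u * t ^ (r - 1) ≤ (u + t) ^ r := by
  have h := one_add_mul_self_le_rpow_one_add
    (le_trans (by norm_num) (by positivity : (0:ℝ) ≤ u / t)) hr
  have ht' : t ≠ 0 := ne_of_gt ht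
  have h1 : (u + t) ^ r = t ^ r * (1 + u / t) ^ r := by
    rw [← Real.mul_rpow ht.le (by positivity)]
    congr 1
    field_simp
    ring
  have h2 : t ^ (r - 1) = t ^ r / t := by
    rw [Real.rpow_sub ht, Real.rpow_one]
  rw [h1, h2]
  have htr : 0 ≤ t ^ r := Real.rpow_nonneg ht.le r
  calc t ^ r + r * u * (t ^ r / t) = t ^ r * (1 + r * (u / t)) := by field_simp
    _ ≤ t ^ r * (1 + u / t) ^ r := by
        apply mul_le_mul_of_nonneg_left _ htr
        simpa [mul_div_assoc] using h

lemma lemB (x y q : ℝ) (hx : 0 ≤ x) (hy : 0 ≤ y) (hq : 2 ≤ q) :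
    x ^ q + y ^ q + q * x * y ^ (q - 1) ≤ (x + y) ^ q := by
  have hq1 : (1:ℝ) ≤ q := by linarith
  have hq1' : (1:ℝ) ≤ q - 1 := by linarith
  set G : ℝ → ℝ := fun t => (x + t) ^ q - x ^ q - t ^ q - q * x * t ^ (q - 1) with hG
  have hd : ∀ t : ℝ, HasDerivAt G
      (q * (x + t) ^ (q - 1) - q * t ^ (q - 1) - q * x * ((q - 1) * t ^ (q - 1 - 1))) t := by
    intro t
    have h1 : HasDerivAt (fun t : ℝ => (x + t) ^ q) (q * (x + t) ^ (q - 1)) t := by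
      have := (Real.hasDerivAt_rpow_const (x := x + t) (p := q) (Or.inr hq1)).comp t
        ((hasDerivAt_id t).const_add x)
      simpa [Function.comp_def] using this
    have h2 : HasDerivAt (fun t : ℝ => t ^ q) (q * t ^ (q - 1)) t :=
      Real.hasDerivAt_rpow_const (Or.inr hq1)
    have h3 : HasDerivAt (fun t : ℝ => q * x * t ^ (q - 1))
        (q * x * ((q - 1) * t ^ (q - 1 - 1))) t :=
      (Real.hasDerivAt_rpow_const (Or.inr hq1')).const_mul (q * x)
    exact (((h1.sub_const (x ^ q)).sub h2).sub h3)
  have hmono : MonotoneOn G (Set.Ici 0) := by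
    apply monotoneOn_of_deriv_nonneg (convex_Ici 0)
    · exact fun t _ => ((hd t).continuousAt).continuousWithinAt
    · exact fun t _ => ((hd t).differentiableAt).differentiableWithinAt
    · intro t ht
      rw [interior_Ici] at ht
      have ht' : 0 < t := ht
      rw [(hd t).deriv]
      have hb := bern x t (q - 1) hx ht' hq1'
      have : q - 1 - 1 = q - 2 := by ring
      nlinarith [hb, Real.rpow_nonneg ht'.le (q-1-1)]
  have h0 : G 0 = 0 := by
    have : (0:ℝ) ^ q = 0 := Real.zero_rpow (by linarith)
    have h2 : (0:ℝ) ^ (q - 1) = 0 := Real.zero_rpow (by linarith)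
    simp [hG, this, h2]
  have := hmono (Set.mem_Ici.2 le_rfl) (Set.mem_Ici.2 hy) hy
  rw [h0] at this
  have h' : 0 ≤ (x + y) ^ q - x ^ q - y ^ q - q * x * y ^ (q - 1) := this
  linarith

theorem stmt_0 (x y p : ℝ) (hx : 0 ≤ x) (hy : 0 ≤ y) (hp : 3 ≤ p) :
    (x + y) ^ p - x ^ p - y ^ p - p * x ^ (p - 1) * y - p * x * y ^ (p - 1) ≥ 0 := by
  have hp1 : (1:ℝ) ≤ p := by linarith
  have hp1' : (1:ℝ) ≤ p - 1 := by linarith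
  set F : ℝ → ℝ := fun t =>
    (x + t) ^ p - x ^ p - t ^ p - p * x ^ (p - 1) * t - p * x * t ^ (p - 1) with hF
  have hd : ∀ t : ℝ, HasDerivAt F
      (p * (x + t) ^ (p - 1) - p * t ^ (p - 1) - p * x ^ (p - 1)
        - p * x * ((p - 1) * t ^ (p - 1 - 1))) t := by
    intro t
    have h1 : HasDerivAt (fun t : ℝ => (x + t) ^ p) (p * (x + t) ^ (p - 1)) t := by
      have := (Real.hasDerivAt_rpow_const (x := x + t) (p := p) (Or.inr hp1)).comp t
        ((hasDerivAt_id t).const_add x)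
      simpa [Function.comp_def] using this
    have h2 : HasDerivAt (fun t : ℝ => t ^ p) (p * t ^ (p - 1)) t :=
      Real.hasDerivAt_rpow_const (Or.inr hp1)
    have h3 : HasDerivAt (fun t : ℝ => p * x ^ (p - 1) * t) (p * x ^ (p - 1)) t := by
      simpa using (hasDerivAt_id t).const_mul (p * x ^ (p - 1))
    have h4 : HasDerivAt (fun t : ℝ => p * x * t ^ (p - 1))
        (p * x * ((p - 1) * t ^ (p - 1 - 1))) t :=
      (Real.hasDerivAt_rpow_const (Or.inr hp1')).const_mul (p * x)
    exact (((h1.sub_const (x ^ p)).sub h2).sub h3).sub h4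
  have hmono : MonotoneOn F (Set.Ici 0) := by
    apply monotoneOn_of_deriv_nonneg (convex_Ici 0)
    · exact fun t _ => ((hd t).continuousAt).continuousWithinAt
    · exact fun t _ => ((hd t).differentiableAt).differentiableWithinAt
    · intro t ht
      rw [interior_Ici] at ht
      have ht' : 0 < t := ht
      rw [(hd t).deriv]
      have hb := lemB x t (p - 1) hx ht'.le (by linarith)
      have he : p - 1 - 1 = p - 2 := by ring
      nlinarith [hb]
  have h0 : F 0 = 0 := by
    have h1 : (0:ℝ) ^ p = 0 := Real.zero_rpow (by linarith)
    have h2 : (0:ℝ) ^ (p - 1) = 0 := Real.zero_rpow (by linarith)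
    simp [hF, h1, h2]
  have := hmono (Set.mem_Ici.2 le_rfl) (Set.mem_Ici.2 hy) hy
  rw [h0] at this
  exact this
end

section
/- For every real p with 2 < p ≤ 3 there exists a constant C = C(p) > 0 such that for all real x, y: | |x+y|^p - |x|^p - |y|^p - p·x·y·(|x|^{p-2} + |y|^{p-2}) | ≤ C·|x|^{p-1}·|y| if |x| ≤ |y|, and ≤ C·|x|·|y|^{p-1} if |x| ≥ |y|. -/
open Real Filter Topology

-- derivative of s * |s|^q, q > 0
lemma hasDerivAt_mul_abs_rpow {q : ℝ} (hq : 0 < q) (t : ℝ) :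
    HasDerivAt (fun s : ℝ => s * |s| ^ q) ((q + 1) * |t| ^ q) t := by
  rcases lt_trichotomy t 0 with ht | rfl | ht
  · have h0 : HasDerivAt (fun s : ℝ => -((-s) ^ (q + 1))) ((q + 1) * (-t) ^ q) t := by
      have h1 : HasDerivAt (fun s : ℝ => (-s) ^ (q + 1))
          ((q + 1) * (-t) ^ (q + 1 - 1) * (-1)) t :=
        (Real.hasDerivAt_rpow_const (x := -t) (p := q + 1)
          (Or.inl (by linarith))).comp t (hasDerivAt_neg t)
      have := h1.neg
      rw [add_sub_cancel_right, show -((q + 1) * (-t) ^ q * -1) = (q + 1) * (-t) ^ q by ring] at this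
      exact this
    rw [abs_of_neg ht]
    apply h0.congr_of_eventuallyEq
    filter_upwards [eventually_lt_nhds ht] with s hs
    rw [abs_of_neg hs, Real.rpow_add (by linarith) q 1, Real.rpow_one]
    ring
  · rw [hasDerivAt_iff_tendsto_slope]
    have h : Tendsto (fun s : ℝ => |s| ^ q) (𝓝[≠] (0:ℝ)) (𝓝 ((q+1) * |(0:ℝ)| ^ q)) := by
      have hc : ContinuousAt (fun s : ℝ => |s| ^ q) 0 :=
        (Real.continuousAt_rpow_const _ _ (Or.inr hq.le)).comp continuous_abs.continuousAt
      have h2 : Tendsto (fun s : ℝ => |s| ^ q) (𝓝[≠] (0:ℝ)) (𝓝 (|(0:ℝ)| ^ q)) :=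
        hc.tendsto.mono_left nhdsWithin_le_nhds
      simpa [abs_zero, Real.zero_rpow hq.ne'] using h2
    apply h.congr'
    filter_upwards [self_mem_nhdsWithin] with s hs
    have hs' : s ≠ 0 := hs
    rw [slope_def_field]
    simp [hs']
  · have h0 : HasDerivAt (fun s : ℝ => s ^ (q + 1)) ((q + 1) * t ^ (q + 1 - 1)) t :=
      Real.hasDerivAt_rpow_const (Or.inl (by linarith))
    have h0' : HasDerivAt (fun s : ℝ => s ^ (q + 1)) ((q + 1) * |t| ^ q) t := by
      rwa [add_sub_cancel_right, abs_of_pos ht] at *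
    apply h0'.congr_of_eventuallyEq
    filter_upwards [eventually_gt_nhds ht] with s hs
    rw [abs_of_pos hs, Real.rpow_add hs q 1, Real.rpow_one]
    ring

-- derivative of |s|^q, q > 1
lemma hasDerivAt_abs_rpow2 {q : ℝ} (hq : 1 < q) (t : ℝ) :
    HasDerivAt (fun s : ℝ => |s| ^ q) (q * t * |t| ^ (q - 2)) t := by
  rcases lt_trichotomy t 0 with ht | rfl | ht
  · have h1 : HasDerivAt (fun s : ℝ => (-s) ^ q) (q * (-t) ^ (q - 1) * (-1)) t :=
      (Real.hasDerivAt_rpow_const (x := -t) (p := q)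
        (Or.inl (by linarith))).comp t (hasDerivAt_neg t)
    have h2 : q * (-t) ^ (q - 1) * (-1) = q * t * |t| ^ (q - 2) := by
      rw [abs_of_neg ht, show q - 1 = (q - 2) + 1 by ring,
        Real.rpow_add (by linarith) (q-2) 1, Real.rpow_one]
      ring
    rw [h2] at h1
    apply h1.congr_of_eventuallyEq
    filter_upwards [eventually_lt_nhds ht] with s hs
    rw [abs_of_neg hs]
  · rw [hasDerivAt_iff_tendsto_slope]
    have key : Tendsto (fun s : ℝ => |s| ^ (q - 1)) (𝓝[≠] (0:ℝ)) (𝓝 0) := by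
      have hc : ContinuousAt (fun s : ℝ => |s| ^ (q - 1)) 0 :=
        (Real.continuousAt_rpow_const _ _ (Or.inr (by linarith))).comp
          continuous_abs.continuousAt
      have h2 : Tendsto (fun s : ℝ => |s| ^ (q-1)) (𝓝[≠] (0:ℝ)) (𝓝 (|(0:ℝ)| ^ (q-1))) :=
        hc.tendsto.mono_left nhdsWithin_le_nhds
      simpa [abs_zero, Real.zero_rpow (show q - 1 ≠ 0 by intro h; linarith [sub_eq_zero.mp h])] using h2
    have h0 : (q * (0:ℝ) * |(0:ℝ)| ^ (q - 2)) = 0 := by ring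
    rw [h0]
    apply squeeze_zero_norm' _ key
    filter_upwards [self_mem_nhdsWithin] with s hs
    have hs' : (s:ℝ) ≠ 0 := hs
    have habs : (0:ℝ) < |s| := abs_pos.mpr hs'
    rw [slope_def_field]
    simp only [sub_zero, abs_zero, Real.zero_rpow (show q ≠ 0 by linarith)]
    have : ‖|s| ^ q / s‖ = |s| ^ (q - 1) * (|s| / |s|) := by
      rw [Real.norm_eq_abs, abs_div, Real.abs_rpow_of_nonneg (abs_nonneg s), abs_abs,
        show q = (q - 1) + 1 by ring, Real.rpow_add habs, Real.rpow_one, mul_div_assoc]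
      norm_num
    rw [this, div_self habs.ne', mul_one]
  · have h1 : HasDerivAt (fun s : ℝ => s ^ q) (q * t ^ (q - 1)) t :=
      Real.hasDerivAt_rpow_const (Or.inl ht.ne')
    have h2 : q * t ^ (q - 1) = q * t * |t| ^ (q - 2) := by
      rw [abs_of_pos ht, show q - 1 = (q - 2) + 1 by ring,
        Real.rpow_add ht (q-2) 1, Real.rpow_one]
      ring
    rw [h2] at h1
    apply h1.congr_of_eventuallyEq
    filter_upwards [eventually_gt_nhds ht] with s hs
    rw [abs_of_pos hs]

-- Lipschitz bound for the derivative t ↦ p * t * |t|^(p-2)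
lemma lipschitz_deriv {p : ℝ} (hp1 : 2 < p) (y s : ℝ) (hs : |s| ≤ |y|) :
    |p * (y + s) * |y + s| ^ (p - 2) - p * y * |y| ^ (p - 2)|
      ≤ p * (p - 1) * (2 * |y|) ^ (p - 2) * |s| := by
  have hq : (0:ℝ) < p - 2 := by linarith
  set S : Set ℝ := Metric.closedBall (0:ℝ) (2 * |y|) with hS
  have hconv : Convex ℝ S := convex_closedBall _ _
  have hderiv : ∀ t ∈ S, HasDerivWithinAt (fun t : ℝ => p * (t * |t| ^ (p - 2)))
      (p * ((p - 2 + 1) * |t| ^ (p - 2))) S t :=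
    fun t _ => ((hasDerivAt_mul_abs_rpow hq t).const_mul p).hasDerivWithinAt
  have hbound : ∀ t ∈ S, ‖p * ((p - 2 + 1) * |t| ^ (p - 2))‖
      ≤ p * (p - 1) * (2 * |y|) ^ (p - 2) := by
    intro t ht
    have ht' : |t| ≤ 2 * |y| := by
      simpa [Real.dist_eq] using Metric.mem_closedBall.mp ht
    have h1 : |t| ^ (p - 2) ≤ (2 * |y|) ^ (p - 2) :=
      Real.rpow_le_rpow (abs_nonneg t) ht' hq.le
    have h2 : (0:ℝ) ≤ |t| ^ (p - 2) := Real.rpow_nonneg (abs_nonneg t) _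
    have hp0 : (0:ℝ) < p := by linarith
    have hpp : (0:ℝ) ≤ p * (p - 1) := by nlinarith
    rw [Real.norm_eq_abs,
      abs_of_nonneg (mul_nonneg hp0.le (mul_nonneg (by linarith) h2))]
    calc p * ((p - 2 + 1) * |t| ^ (p - 2)) = p * (p - 1) * |t| ^ (p - 2) := by ring
    _ ≤ p * (p - 1) * (2 * |y|) ^ (p - 2) := mul_le_mul_of_nonneg_left h1 hpp
  have hyS : y ∈ S := by
    simp only [hS, Metric.mem_closedBall, Real.dist_eq, sub_zero]
    have := abs_nonneg y
    linarith [le_abs_self y, abs_abs y]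
  have hysS : y + s ∈ S := by
    simp only [hS, Metric.mem_closedBall, Real.dist_eq, sub_zero]
    calc |y + s| ≤ |y| + |s| := abs_add_le _ _
    _ ≤ 2 * |y| := by linarith
  have := hconv.norm_image_sub_le_of_norm_hasDerivWithin_le hderiv hbound hyS hysS
  simp only [Real.norm_eq_abs, add_sub_cancel_left] at this
  have heq : p * (y + s) * |y + s| ^ (p - 2) - p * y * |y| ^ (p - 2)
      = p * ((y + s) * |y + s| ^ (p - 2)) - p * (y * |y| ^ (p - 2)) := by ring
  rw [heq]
  exact this

-- Taylor-type bound
lemma taylor_bound {p : ℝ} (hp1 : 2 < p) (x y : ℝ) (hxy : |x| ≤ |y|) :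
    |(|x + y| ^ p - |y| ^ p - p * x * y * |y| ^ (p - 2))|
      ≤ p * (p - 1) * (2 * |y|) ^ (p - 2) * x ^ 2 := by
  set L : ℝ := p * (p - 1) * (2 * |y|) ^ (p - 2) with hL
  set g : ℝ → ℝ := fun s => |y + s| ^ p - s * (p * y * |y| ^ (p - 2)) with hg
  set S : Set ℝ := Metric.closedBall (0:ℝ) |x| with hS
  have hconv : Convex ℝ S := convex_closedBall _ _
  have hderiv : ∀ s ∈ S, HasDerivWithinAt g
      (p * (y + s) * |y + s| ^ (p - 2) - p * y * |y| ^ (p - 2)) S s := by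
    intro s _
    have h1 : HasDerivAt (fun s : ℝ => |y + s| ^ p)
        (p * (y + s) * |y + s| ^ (p - 2) * 1) s :=
      (hasDerivAt_abs_rpow2 (by linarith) (y + s)).comp s
        ((hasDerivAt_id s).const_add y)
    have h2 : HasDerivAt (fun s : ℝ => s * (p * y * |y| ^ (p - 2)))
        (p * y * |y| ^ (p - 2)) s := by
      simpa using (hasDerivAt_id s).mul_const (p * y * |y| ^ (p - 2))
    have h3 := (h1.sub h2).hasDerivWithinAt (s := S)
    rw [mul_one] at h3
    exact h3
  have hbound : ∀ s ∈ S, ‖p * (y + s) * |y + s| ^ (p - 2) - p * y * |y| ^ (p - 2)‖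
      ≤ L * |x| := by
    intro s hsS
    have hs : |s| ≤ |x| := by
      simpa [Real.dist_eq] using Metric.mem_closedBall.mp hsS
    have := lipschitz_deriv hp1 y s (le_trans hs hxy)
    have hL0 : 0 ≤ L := by
      have h3 := Real.rpow_nonneg (by positivity : (0:ℝ) ≤ 2 * |y|) (p - 2)
      have : (0:ℝ) ≤ p * (p - 1) * (2 * |y|) ^ (p - 2) :=
        mul_nonneg (by nlinarith) h3
      linarith
    rw [Real.norm_eq_abs]
    calc |p * (y + s) * |y + s| ^ (p - 2) - p * y * |y| ^ (p - 2)| ≤ L * |s| := this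
    _ ≤ L * |x| := by nlinarith
  have h0S : (0:ℝ) ∈ S := by simp [hS, abs_nonneg]
  have hxS : x ∈ S := by simp [hS, Real.dist_eq]
  have := hconv.norm_image_sub_le_of_norm_hasDerivWithin_le hderiv hbound h0S hxS
  have hgx : g x - g 0 = |x + y| ^ p - |y| ^ p - p * x * y * |y| ^ (p - 2) := by
    simp only [hg]
    rw [add_comm y x]
    ring
  rw [hgx, Real.norm_eq_abs, Real.norm_eq_abs, sub_zero] at this
  calc |(|x + y| ^ p - |y| ^ p - p * x * y * |y| ^ (p - 2))| ≤ L * |x| * |x| := this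
  _ = L * x ^ 2 := by rw [mul_assoc, ← abs_mul, ← sq, abs_sq]

lemma rpow_helper {p : ℝ} (hp1 : 2 < p) (hp2 : p ≤ 3) {a b : ℝ} (ha : 0 ≤ a)
    (hab : a ≤ b) : b ^ (p - 2) * a ^ 2 ≤ a ^ (p - 1) * b := by
  rcases ha.eq_or_lt with h0 | ha'
  · rw [← h0, Real.zero_rpow (show p - 1 ≠ 0 by intro h; rw [sub_eq_zero] at h; linarith)]
    norm_num
  · have hb : (0:ℝ) < b := lt_of_lt_of_le ha' hab
    have hb3 : (0:ℝ) < b ^ (3 - p) := Real.rpow_pos_of_pos hb _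
    have h1 : a ^ (3 - p) ≤ b ^ (3 - p) := Real.rpow_le_rpow ha hab (by linarith)
    have e1 : b ^ (p - 2) * a ^ 2 * b ^ (3 - p) = a ^ 2 * b := by
      rw [mul_right_comm, ← Real.rpow_add hb, show p - 2 + (3 - p) = (1:ℝ) by ring,
        Real.rpow_one]
      ring
    have e2 : a ^ (p - 1) * b * a ^ (3 - p) = a ^ 2 * b := by
      rw [mul_right_comm, ← Real.rpow_add ha', show p - 1 + (3 - p) = (2:ℝ) by ring,
        show (2:ℝ) = ((2:ℕ):ℝ) by norm_num, Real.rpow_natCast]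
    have key : b ^ (p - 2) * a ^ 2 * b ^ (3 - p) ≤ a ^ (p - 1) * b * b ^ (3 - p) := by
      calc b ^ (p - 2) * a ^ 2 * b ^ (3 - p) = a ^ (p - 1) * b * a ^ (3 - p) := by
            rw [e1, ← e2]
      _ ≤ a ^ (p - 1) * b * b ^ (3 - p) :=
          mul_le_mul_of_nonneg_left h1 (mul_nonneg (Real.rpow_nonneg ha _) hb.le)
    exact le_of_mul_le_mul_right key hb3

lemma main_key {p : ℝ} (hp1 : 2 < p) (hp2 : p ≤ 3) (x y : ℝ) (hxy : |x| ≤ |y|) :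
    |(|x + y| ^ p - |x| ^ p - |y| ^ p - p * x * y * (|x| ^ (p - 2) + |y| ^ (p - 2)))|
      ≤ (p * (p - 1) * 2 ^ (p - 2) + 1 + p) * |x| ^ (p - 1) * |y| := by
  have hx0 : (0:ℝ) ≤ |x| := abs_nonneg x
  have hT := taylor_bound hp1 x y hxy
  set T : ℝ := |x + y| ^ p - |y| ^ p - p * x * y * |y| ^ (p - 2) with hTdef
  set A : ℝ := |x| ^ (p - 1) * |y| with hA
  have hA0 : 0 ≤ A := mul_nonneg (Real.rpow_nonneg hx0 _) (abs_nonneg y)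
  -- |x| * |x|^(p-2) = |x|^(p-1)
  have habs : |x| * |x| ^ (p - 2) = |x| ^ (p - 1) := by
    rcases hx0.eq_or_lt with h0 | hx'
    · rw [← h0, Real.zero_rpow (by intro h; rw [sub_eq_zero] at h; linarith),
        Real.zero_rpow (by intro h; rw [sub_eq_zero] at h; linarith), zero_mul]
    · have : |x| ^ (p - 1) = |x| * |x| ^ (p - 2) := by
        rw [show p - 1 = 1 + (p - 2) by ring, Real.rpow_add hx', Real.rpow_one]
      linarith
  -- |x|^p ≤ A
  have h1 : |x| ^ p ≤ A := by
    rcases hx0.eq_or_lt with h0 | hx'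
    · rw [← h0, Real.zero_rpow (by positivity : p ≠ 0)]; exact hA0
    · have heq : |x| ^ p = |x| ^ (p - 1) * |x| := by
        conv_lhs => rw [show p = (p - 1) + 1 by ring]
        rw [Real.rpow_add hx', Real.rpow_one]
      rw [heq]
      exact mul_le_mul_of_nonneg_left hxy (Real.rpow_nonneg hx0 _)
  -- |p x y |x|^(p-2)| = p * A
  have h2 : |p * x * y * |x| ^ (p - 2)| ≤ p * A := by
    rw [abs_mul, abs_mul, abs_mul, abs_of_pos (by linarith : (0:ℝ) < p),
      Real.abs_rpow_of_nonneg hx0, abs_abs]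
    rw [hA, show p * |x| * |y| * |x| ^ (p - 2) = p * ((|x| * |x| ^ (p - 2)) * |y|) by ring,
      habs]
  -- Taylor term
  have h3 : |T| ≤ p * (p - 1) * 2 ^ (p - 2) * A := by
    have hmul : (2 * |y|) ^ (p - 2) = 2 ^ (p - 2) * |y| ^ (p - 2) :=
      Real.mul_rpow (by norm_num) (abs_nonneg y)
    have hhelp : |y| ^ (p - 2) * |x| ^ 2 ≤ A := rpow_helper hp1 hp2 hx0 hxy
    have hpp : (0:ℝ) ≤ p * (p - 1) * 2 ^ (p - 2) :=
      mul_nonneg (by nlinarith) (Real.rpow_nonneg (by norm_num) _)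
    calc |T| ≤ p * (p - 1) * (2 * |y|) ^ (p - 2) * x ^ 2 := hT
    _ = p * (p - 1) * 2 ^ (p - 2) * (|y| ^ (p - 2) * |x| ^ 2) := by
        rw [hmul, ← sq_abs x]; ring
    _ ≤ p * (p - 1) * 2 ^ (p - 2) * A := mul_le_mul_of_nonneg_left hhelp hpp
  have hsplit : |x + y| ^ p - |x| ^ p - |y| ^ p - p * x * y * (|x| ^ (p - 2) + |y| ^ (p - 2))
      = T - (|x| ^ p + p * x * y * |x| ^ (p - 2)) := by rw [hTdef]; ring
  rw [hsplit]
  calc |T - (|x| ^ p + p * x * y * |x| ^ (p - 2))|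
      ≤ |T| + |(|x| ^ p + p * x * y * |x| ^ (p - 2))| := abs_sub _ _
  _ ≤ |T| + (|(|x| ^ p)| + |p * x * y * |x| ^ (p - 2)|) := by
      have := abs_add_le (|x| ^ p) (p * x * y * |x| ^ (p - 2))
      linarith
  _ ≤ p * (p - 1) * 2 ^ (p - 2) * A + (A + p * A) := by
      rw [abs_of_nonneg (Real.rpow_nonneg hx0 p)]
      have := h3; have := h1; have := h2
      linarith
  _ = (p * (p - 1) * 2 ^ (p - 2) + 1 + p) * |x| ^ (p - 1) * |y| := by rw [hA]; ring

theorem stmt_1 (p : ℝ) (hp1 : 2 < p) (hp2 : p ≤ 3) :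
    ∃ C : ℝ, 0 < C ∧ ∀ x y : ℝ,
      (|x| ≤ |y| →
        |(|x + y| ^ p - |x| ^ p - |y| ^ p - p * x * y * (|x| ^ (p - 2) + |y| ^ (p - 2)))|
          ≤ C * |x| ^ (p - 1) * |y|) ∧
      (|y| ≤ |x| →
        |(|x + y| ^ p - |x| ^ p - |y| ^ p - p * x * y * (|x| ^ (p - 2) + |y| ^ (p - 2)))|
          ≤ C * |x| * |y| ^ (p - 1)) := by
  refine ⟨p * (p - 1) * 2 ^ (p - 2) + 1 + p, ?_, fun x y => ⟨fun hxy => main_key hp1 hp2 x y hxy, fun hyx => ?_⟩⟩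
  · have h0 : (0:ℝ) ≤ p * (p - 1) * 2 ^ (p - 2) :=
      mul_nonneg (by nlinarith) (Real.rpow_nonneg (by norm_num) _)
    linarith
  · have h := main_key hp1 hp2 y x hyx
    have hE : |y + x| ^ p - |y| ^ p - |x| ^ p - p * y * x * (|y| ^ (p - 2) + |x| ^ (p - 2))
        = |x + y| ^ p - |x| ^ p - |y| ^ p - p * x * y * (|x| ^ (p - 2) + |y| ^ (p - 2)) := by
      rw [add_comm y x]; ring
    rw [hE] at h
    calc |(|x + y| ^ p - |x| ^ p - |y| ^ p - p * x * y * (|x| ^ (p - 2) + |y| ^ (p - 2)))|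
        ≤ (p * (p - 1) * 2 ^ (p - 2) + 1 + p) * |y| ^ (p - 1) * |x| := h
    _ = (p * (p - 1) * 2 ^ (p - 2) + 1 + p) * |x| * |y| ^ (p - 1) := by ring
end
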